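/- Let w and m be positive natural numbers with 1 ≤ m ≤ 2^w, let J be uniformly distributed on {0, 1, …, 2^w − 1}, and let Y = 1 + ⌊m·J/2^w⌋. Then Y is uniformly distributed on {1, …, m} (i.e., P(Y = k) = 1/m for all 1 ≤ k ≤ m) if and only if m divides 2^w. -/

import Mathlib

/-- The probability that the multiply-and-floor method outputs `k`, when `J` is uniformly
distributed on `{0, 1, …, 2^w − 1}` and `Y = 1 + ⌊m·J/2^w⌋`:
`P(Y = k) = #{j < 2^w | 1 + ⌊m·j/2^w⌋ = k} / 2^w`. -/
def floorMulProb (w m k : ℕ) : ℚ :=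
  (((Finset.range (2 ^ w)).filter (fun j => 1 + m * j / 2 ^ w = k)).card : ℚ) / 2 ^ w

/-- for `1 ≤ m ≤ 2^w`, the output `Y = 1 + ⌊m·J/2^w⌋` of the
multiply-and-floor method is uniformly distributed on `{1, …, m}` (i.e. `P(Y = k) = 1/m`
for all `1 ≤ k ≤ m`) if and only if `m` divides `2^w`. -/
theorem floorMul_uniform_iff_dvd (w m : ℕ) (hw : 0 < w) (hm1 : 1 ≤ m) (hm2 : m ≤ 2 ^ w) :
    (∀ k ∈ Finset.Icc 1 m, floorMulProb w m k = 1 / m) ↔ m ∣ 2 ^ w := by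
  have hN : (0:ℕ) < 2 ^ w := Nat.pow_pos (by norm_num)
  have hNQ : ((2:ℚ) ^ w) ≠ 0 := by positivity
  have hm0 : 0 < m := hm1
  have hmQ : ((m:ℚ)) ≠ 0 := by exact_mod_cast hm0.ne'
  constructor
  · intro h
    have h1 := h 1 (Finset.mem_Icc.mpr ⟨le_refl 1, hm1⟩)
    unfold floorMulProb at h1
    set c := ((Finset.range (2 ^ w)).filter (fun j => 1 + m * j / 2 ^ w = 1)).card with hc
    rw [div_eq_div_iff hNQ hmQ, one_mul] at h1
    have : (c * m : ℕ) = 2 ^ w := by exact_mod_cast h1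
    exact Dvd.intro_left c this
  · rintro ⟨d, hd⟩ k hk
    have hd0 : 0 < d := by
      rcases Nat.eq_zero_or_pos d with h | h
      · subst h; simp at hd
      · exact h
    obtain ⟨hk1, hkm⟩ := Finset.mem_Icc.mp hk
    have key : ∀ j, j < 2 ^ w → (1 + m * j / 2 ^ w = k ↔ (k-1)*d ≤ j ∧ j < k*d) := by
      intro j hj
      rw [hd]
      have : m * j / (m * d) = j / d := Nat.mul_div_mul_left j d hm0
      rw [this]
      constructor
      · intro hkeq
        have hjd : j / d = k - 1 := by omega
        constructor
        · exact (Nat.le_div_iff_mul_le hd0).mp (le_of_eq hjd.symm)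
        · exact (Nat.div_lt_iff_lt_mul hd0).mp (by omega)
      · rintro ⟨hlo, hhi⟩
        have : j / d = k - 1 := by
          apply Nat.div_eq_of_lt_le
          · exact hlo
          · have : (k-1+1) = k := by omega
            rw [this]; exact hhi
        omega
    have hset : (Finset.range (2 ^ w)).filter (fun j => 1 + m * j / 2 ^ w = k)
        = Finset.Ico ((k-1)*d) (k*d) := by
      ext j
      simp only [Finset.mem_filter, Finset.mem_range, Finset.mem_Ico]
      constructor
      · rintro ⟨hj, hjk⟩; exact (key j hj).mp hjk
      · rintro ⟨hlo, hhi⟩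
        have hj : j < 2 ^ w := by
          have : k * d ≤ m * d := Nat.mul_le_mul_right d hkm
          omega
        exact ⟨hj, (key j hj).mpr ⟨hlo, hhi⟩⟩
    unfold floorMulProb
    rw [hset, Nat.card_Ico]
    have hcard : k * d - (k-1) * d = d := by
      have : (k-1)*d + d = k*d := by
        have : (k-1+1) = k := by omega
        calc (k-1)*d + d = (k-1+1)*d := by ring
          _ = k*d := by rw [this]
      omega
    rw [hcard]
    have : ((2:ℚ)^w) = (m:ℚ) * d := by exact_mod_cast congrArg (Nat.cast : ℕ → ℚ) hd
    rw [this]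
    have hdQ : ((d:ℚ)) ≠ 0 := by exact_mod_cast hd0.ne'
    field_simp
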